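/- Let a, b, c, d be nonnegative integers with b, d positive, gcd(a,b) = 1, gcd(c,d) = 1, and bc − ad = 1. Then every rational number x with a/b ≤ x ≤ c/d appears in the tree T(a/b, c/d). -/

import Mathlib

/-- The mediant of two rationals `p` and `q`: `(num p + num q) / (den p + den q)`. -/
def mediant (p q : ℚ) : ℚ := ((p.num + q.num : ℤ) : ℚ) / ((p.den + q.den : ℕ) : ℚ)

/-- Insert between every pair of consecutive entries of a list their mediant. -/
def insertMediants : List ℚ → List ℚ
  | [] => []
  | [p] => [p]
  | p :: q :: rest => p :: mediant p q :: insertMediants (q :: rest)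

/-- The sequences of the tree `T(r, s)`: `S r s 0 = [r, s]`, and each successive
sequence is obtained by inserting mediants between consecutive entries. -/
def S (r s : ℚ) : ℕ → List ℚ
  | 0 => [r, s]
  | n + 1 => insertMediants (S r s n)

lemma head?_insertMediants : ∀ l : List ℚ, (insertMediants l).head? = l.head?
  | [] => rfl
  | [p] => rfl
  | p :: q :: rest => rfl

lemma getLast?_insertMediants : ∀ l : List ℚ, (insertMediants l).getLast? = l.getLast?
  | [] => rfl
  | [p] => rfl
  | p :: q :: rest => by
    show (p :: mediant p q :: insertMediants (q :: rest)).getLast? = _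
    rw [List.getLast?_cons_cons, List.getLast?_cons_cons]
    have hL : insertMediants (q :: rest) = q :: (insertMediants (q :: rest)).tail :=
      List.eq_cons_of_mem_head? (by rw [head?_insertMediants]; rfl)
    rw [hL, List.getLast?_cons_cons, ← hL]
    exact getLast?_insertMediants (q :: rest)

lemma S_head? (r s : ℚ) : ∀ n, (S r s n).head? = some r
  | 0 => rfl
  | n + 1 => by rw [S, head?_insertMediants, S_head? r s n]

lemma S_getLast? (r s : ℚ) : ∀ n, (S r s n).getLast? = some s
  | 0 => rfl
  | n + 1 => by rw [S, getLast?_insertMediants, S_getLast? r s n]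

lemma exists_concat_of_getLast? : ∀ {l : List ℚ} {s : ℚ}, l.getLast? = some s →
    ∃ xs, l = xs ++ [s]
  | [], s, h => by simp at h
  | [a], s, h => by simp at h; exact ⟨[], by simp [h]⟩
  | a :: b :: t, s, h => by
    rw [List.getLast?_cons_cons] at h
    obtain ⟨xs, hxs⟩ := exists_concat_of_getLast? h
    exact ⟨a :: xs, by simp [hxs]⟩

lemma insertMediants_glue : ∀ (xs : List ℚ) (m : ℚ) (ys : List ℚ),
    insertMediants (xs ++ m :: ys) =
      insertMediants (xs ++ [m]) ++ (insertMediants (m :: ys)).tail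
  | [], m, ys => by
    cases ys with
    | nil => rfl
    | cons y t => rfl
  | [p], m, ys => by
    cases ys with
    | nil => rfl
    | cons y t => rfl
  | p :: q :: xs, m, ys => by
    show p :: mediant p q :: insertMediants ((q :: xs) ++ m :: ys) = _
    rw [show (p :: q :: xs) ++ [m] = p :: ((q :: xs) ++ [m]) by simp]
    show _ = (p :: mediant p q :: insertMediants ((q :: xs) ++ [m])) ++ _
    rw [insertMediants_glue (q :: xs) m ys]
    simp

lemma S_succ_glue (r s : ℚ) : ∀ n,
    S r s (n + 1) = S r (mediant r s) n ++ (S (mediant r s) s n).tail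
  | 0 => rfl
  | n + 1 => by
    obtain ⟨xs, hxs⟩ := exists_concat_of_getLast? (S_getLast? r (mediant r s) n)
    have hhead := S_head? (mediant r s) s n
    have hys : S (mediant r s) s n = mediant r s :: (S (mediant r s) s n).tail :=
      List.eq_cons_of_mem_head? (by rw [hhead]; rfl)
    show insertMediants (S r s (n+1)) = _
    rw [S_succ_glue r s n, hxs]
    conv_lhs => rw [hys]
    rw [show (xs ++ [mediant r s]) ++ (mediant r s :: (S (mediant r s) s n).tail).tail
        = xs ++ mediant r s :: (S (mediant r s) s n).tail by simp]
    rw [insertMediants_glue, ← hxs, ← hys]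
    rfl

lemma mem_S_left {r s x : ℚ} {n : ℕ} (h : x ∈ S r (mediant r s) n) :
    x ∈ S r s (n + 1) := by
  rw [S_succ_glue]; exact List.mem_append_left _ h

lemma mem_S_right {r s x : ℚ} {n : ℕ} (h : x ∈ S (mediant r s) s n) :
    x ∈ S r s (n + 1) := by
  rw [S_succ_glue]
  have hys : S (mediant r s) s n = mediant r s :: (S (mediant r s) s n).tail :=
    List.eq_cons_of_mem_head? (by rw [S_head? (mediant r s) s n]; rfl)
  rw [hys] at h
  rcases List.mem_cons.1 h with h | h
  · subst h
    obtain ⟨xs, hxs⟩ := exists_concat_of_getLast? (S_getLast? r (mediant r s) n)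
    exact List.mem_append_left _ (by rw [hxs]; simp)
  · exact List.mem_append_right _ h

lemma num_den_of_coprime (a b : ℕ) (hb : 0 < b) (hab : Nat.gcd a b = 1) :
    ((a : ℚ) / b).num = a ∧ ((a : ℚ) / b).den = b := by
  have hb' : (0 : ℤ) < (b : ℤ) := mod_cast hb
  have hcop : Nat.Coprime (a : ℤ).natAbs (b : ℤ).natAbs := by
    simpa [Int.natAbs_natCast, Nat.Coprime] using hab
  have h1 : (((a : ℤ) : ℚ) / ((b : ℤ) : ℚ)).num = (a : ℤ) :=
    Rat.num_div_eq_of_coprime hb' hcop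
  have h2 : ((((a : ℤ) : ℚ) / ((b : ℤ) : ℚ)).den : ℤ) = (b : ℤ) :=
    Rat.den_div_eq_of_coprime hb' hcop
  have hcast : (a : ℚ) / b = ((a : ℤ) : ℚ) / ((b : ℤ) : ℚ) := by push_cast; ring
  rw [hcast]
  exact ⟨by exact_mod_cast h1, by exact_mod_cast h2⟩

lemma mediant_eq (a b c d : ℕ) (hb : 0 < b) (hd : 0 < d)
    (hab : Nat.gcd a b = 1) (hcd : Nat.gcd c d = 1) :
    mediant ((a : ℚ) / b) ((c : ℚ) / d) = ((a + c : ℕ) : ℚ) / ((b + d : ℕ) : ℚ) := by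
  obtain ⟨h1, h2⟩ := num_den_of_coprime a b hb hab
  obtain ⟨h3, h4⟩ := num_den_of_coprime c d hd hcd
  rw [mediant, h1, h2, h3, h4]
  push_cast
  ring

lemma gcd_eq_one_of_comb (m n : ℕ) (u v : ℤ) (h : u * m + v * n = 1) :
    Nat.gcd m n = 1 := by
  have : IsCoprime (m : ℤ) (n : ℤ) := ⟨u, v, by linarith⟩
  have := Int.isCoprime_iff_gcd_eq_one.mp this
  simpa [Int.gcd] using this

lemma key : ∀ (k : ℕ) (a b c d : ℕ), 0 < b → 0 < d → Nat.gcd a b = 1 → Nat.gcd c d = 1 →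
    (b : ℤ) * c - a * d = 1 → ∀ x : ℚ, (a : ℚ) / b ≤ x → x ≤ (c : ℚ) / d →
    x.num + x.den ≤ (a : ℤ) + b + c + d + k → ∃ n, x ∈ S ((a : ℚ) / b) ((c : ℚ) / d) n := by
  intro k
  induction k with
  | zero =>
    intro a b c d hb hd hab hcd hdet x hx1 hx2 hbound
    by_cases he1 : x = (a : ℚ) / b
    · exact ⟨0, by rw [he1]; simp [S]⟩
    by_cases he2 : x = (c : ℚ) / d
    · exact ⟨0, by rw [he2]; simp [S]⟩
    -- strict inequalities
    have hb' : (0 : ℚ) < (b : ℚ) := mod_cast hb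
    have hd' : (0 : ℚ) < (d : ℚ) := mod_cast hd
    have hq0 : (0 : ℚ) < (x.den : ℚ) := mod_cast x.pos
    have hxe : x = (x.num : ℚ) / (x.den : ℚ) := (Rat.num_div_den x).symm
    have hs1 : (a : ℚ) / b < x := lt_of_le_of_ne hx1 (fun h => he1 h.symm)
    have hs2 : x < (c : ℚ) / d := lt_of_le_of_ne hx2 he2
    have h1 : (a : ℤ) * x.den + 1 ≤ x.num * b := by
      have : (a : ℚ) * x.den < x.num * b := by
        rw [hxe] at hs1
        exact (div_lt_div_iff₀ hb' hq0).mp hs1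
      have h' : (a : ℤ) * x.den < x.num * b := by exact_mod_cast this
      omega
    have h2 : x.num * d + 1 ≤ (c : ℤ) * x.den := by
      have : (x.num : ℚ) * d < c * x.den := by
        rw [hxe] at hs2
        exact (div_lt_div_iff₀ hq0 hd').mp hs2
      have h' : x.num * d < (c : ℤ) * x.den := by exact_mod_cast this
      omega
    have hid : x.num + (x.den : ℤ) =
        (x.num * b - a * x.den) * (c + d) + ((c : ℤ) * x.den - x.num * d) * (a + b) := by
      linear_combination (-(x.num + (x.den : ℤ))) * hdet
    -- equality forced
    have hb1 : (1 : ℤ) ≤ b := mod_cast hb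
    have hd1 : (1 : ℤ) ≤ d := mod_cast hd
    have ha0 : (0 : ℤ) ≤ a := Int.ofNat_nonneg a
    have hc0 : (0 : ℤ) ≤ c := Int.ofNat_nonneg c
    push_cast at hbound
    have k1 : (1 : ℤ) ≤ x.num * b - a * x.den := by linarith
    have k2 : (1 : ℤ) ≤ (c : ℤ) * x.den - x.num * d := by linarith
    have e1 : x.num * b - a * x.den = 1 := by
      by_contra h
      have h2' : (2 : ℤ) ≤ x.num * b - a * x.den := by omega
      have t1 : 2 * ((c : ℤ) + d) ≤ (x.num * b - a * x.den) * ((c : ℤ) + d) :=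
        mul_le_mul_of_nonneg_right h2' (by linarith)
      have t2 : 1 * ((a : ℤ) + b) ≤ ((c : ℤ) * x.den - x.num * d) * ((a : ℤ) + b) :=
        mul_le_mul_of_nonneg_right k2 (by linarith)
      linarith
    have e2 : (c : ℤ) * x.den - x.num * d = 1 := by
      by_contra h
      have h2' : (2 : ℤ) ≤ (c : ℤ) * x.den - x.num * d := by omega
      have t1 : 1 * ((c : ℤ) + d) ≤ (x.num * b - a * x.den) * ((c : ℤ) + d) :=
        mul_le_mul_of_nonneg_right k1 (by linarith)
      have t2 : 2 * ((a : ℤ) + b) ≤ ((c : ℤ) * x.den - x.num * d) * ((a : ℤ) + b) :=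
        mul_le_mul_of_nonneg_right h2' (by linarith)
      linarith
    have hp : x.num = (a : ℤ) + c := by linear_combination c * e1 + a * e2 - x.num * hdet
    have hq : (x.den : ℤ) = (b : ℤ) + d := by
      linear_combination b * e2 + d * e1 - (x.den : ℤ) * hdet
    refine ⟨1, ?_⟩
    have hq' : x.den = b + d := by exact_mod_cast hq
    have hx : x = mediant ((a : ℚ) / b) ((c : ℚ) / d) := by
      rw [mediant_eq a b c d hb hd hab hcd, hxe, hp, hq']
      push_cast
      ring
    rw [hx]
    show mediant _ _ ∈ insertMediants [(a : ℚ) / b, (c : ℚ) / d]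
    simp [insertMediants]
  | succ k ih =>
    intro a b c d hb hd hab hcd hdet x hx1 hx2 hbound
    by_cases he1 : x = (a : ℚ) / b
    · exact ⟨0, by rw [he1]; simp [S]⟩
    by_cases he2 : x = (c : ℚ) / d
    · exact ⟨0, by rw [he2]; simp [S]⟩
    have hb1 : (1 : ℤ) ≤ b := mod_cast hb
    have hd1 : (1 : ℤ) ≤ d := mod_cast hd
    have hm : mediant ((a : ℚ) / b) ((c : ℚ) / d) = ((a + c : ℕ) : ℚ) / ((b + d : ℕ) : ℚ) :=
      mediant_eq a b c d hb hd hab hcd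
    rcases le_or_gt x (mediant ((a : ℚ) / b) ((c : ℚ) / d)) with hc | hc
    · -- left subinterval [a/b, (a+c)/(b+d)]
      have hgcd' : Nat.gcd (a + c) (b + d) = 1 := by
        apply gcd_eq_one_of_comb _ _ (b : ℤ) (-(a : ℤ))
        push_cast; linarith
      have hdet' : ((b : ℤ)) * (a + c) - (a : ℤ) * (b + d) = 1 := by push_cast; linarith
      have hdet'' : ((b : ℤ)) * ((a + c : ℕ) : ℤ) - (a : ℤ) * ((b + d : ℕ) : ℤ) = 1 := by
        push_cast; linarith
      have hbd : 0 < b + d := by omega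
      have hxm : x ≤ ((a + c : ℕ) : ℚ) / ((b + d : ℕ) : ℚ) := by rw [← hm]; exact hc
      have hbnd : x.num + (x.den : ℤ) ≤ ((a : ℕ) : ℤ) + b + ((a + c : ℕ) : ℤ)
          + ((b + d : ℕ) : ℤ) + k := by
        push_cast; push_cast at hbound; linarith
      obtain ⟨n, hn⟩ := ih a b (a + c) (b + d) hb hbd hab hgcd' hdet'' x hx1 hxm hbnd
      exact ⟨n + 1, mem_S_left (by rw [hm]; exact hn)⟩
    · -- right subinterval
      have hgcd' : Nat.gcd (a + c) (b + d) = 1 := by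
        apply gcd_eq_one_of_comb _ _ (b : ℤ) (-(a : ℤ))
        push_cast; linarith
      have hdet'' : (((b + d : ℕ) : ℤ)) * (c : ℤ) - ((a + c : ℕ) : ℤ) * (d : ℤ) = 1 := by
        push_cast; linarith
      have hbd : 0 < b + d := by omega
      have hxm : ((a + c : ℕ) : ℚ) / ((b + d : ℕ) : ℚ) ≤ x := by rw [← hm]; exact hc.le
      have hbnd : x.num + (x.den : ℤ) ≤ ((a + c : ℕ) : ℤ) + ((b + d : ℕ) : ℤ)
          + (c : ℤ) + d + k := by
        push_cast; push_cast at hbound; linarith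
      obtain ⟨n, hn⟩ := ih (a + c) (b + d) c d hbd hd hgcd' hcd hdet'' x hxm hx2 hbnd
      exact ⟨n + 1, mem_S_right (by rw [hm]; exact hn)⟩

/-- If `a/b` and `c/d` are nonnegative fractions in lowest terms with `bc - ad = 1`,
then every rational `x` with `a/b ≤ x ≤ c/d` appears in the tree `T(a/b, c/d)`. -/
theorem appears_of_crossDeterminant_one (a b c d : ℕ) (hb : 0 < b) (hd : 0 < d)
    (hab : Nat.gcd a b = 1) (hcd : Nat.gcd c d = 1)
    (hdet : (b : ℤ) * c - a * d = 1)
    (x : ℚ) (hx1 : (a : ℚ) / b ≤ x) (hx2 : x ≤ (c : ℚ) / d) :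
    ∃ n, x ∈ S ((a : ℚ) / b) ((c : ℚ) / d) n := by
  apply key (x.num + x.den - ((a : ℤ) + b + c + d)).toNat a b c d hb hd hab hcd hdet x hx1 hx2
  have := Int.self_le_toNat (x.num + x.den - ((a : ℤ) + b + c + d))
  linarith
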